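/- Let n ≥ 2, let Ω ⊆ {(x₁,x₂) ∈ ℝ² : x₂ > 0} be open, and let g be C² on Ω. Define g̃(x₁, x') = g(x₁, |x'|) for (x₁,x') ∈ ℝ × ℝ^{n-1} with (x₁,|x'|) ∈ Ω. Then for x = (x₁, x') with r = |x'| > 0 and (x₁,r) ∈ Ω: div( ∇g̃/√(1+|∇g̃|²) )(x) = div( ∇g/√(1+|∇g|²) )(x₁,r) + ((n-2)/r)·g_{x₂}(x₁,r)/√(1+|∇g(x₁,r)|²). -/

import Mathlib

open Real Set

/-- Directional (partial) derivative of `f : ℝ × ℝ → ℝ` in direction `v`. -/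
noncomputable def pdA (v : ℝ × ℝ) (f : ℝ × ℝ → ℝ) (q : ℝ × ℝ) : ℝ := fderiv ℝ f q v

/-- Directional (partial) derivative of a function of `(x₁, x') ∈ ℝ × ℝ^{n-1}`
in direction `v`. -/
noncomputable def pdB (n : ℕ) (v : ℝ × EuclideanSpace ℝ (Fin (n-1)))
    (f : ℝ × EuclideanSpace ℝ (Fin (n-1)) → ℝ)
    (x : ℝ × EuclideanSpace ℝ (Fin (n-1))) : ℝ :=
  fderiv ℝ f x v

/-- `div(Tf)` for `f : ℝ × ℝ → ℝ`. -/
noncomputable def divTA (f : ℝ × ℝ → ℝ) (q : ℝ × ℝ) : ℝ :=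
  pdA (1, 0) (fun y => pdA (1, 0) f y /
      Real.sqrt (1 + (pdA (1, 0) f y)^2 + (pdA (0, 1) f y)^2)) q +
  pdA (0, 1) (fun y => pdA (0, 1) f y /
      Real.sqrt (1 + (pdA (1, 0) f y)^2 + (pdA (0, 1) f y)^2)) q

/-- `div(Tf)` for `f : ℝ × ℝ^{n-1} → ℝ`. -/
noncomputable def divTB (n : ℕ) (f : ℝ × EuclideanSpace ℝ (Fin (n-1)) → ℝ)
    (x : ℝ × EuclideanSpace ℝ (Fin (n-1))) : ℝ :=
  pdB n (1, 0) (fun y => pdB n (1, 0) f y /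
      Real.sqrt (1 + (pdB n (1, 0) f y)^2
        + ∑ j, (pdB n (0, EuclideanSpace.single j 1) f y)^2)) x +
  ∑ i, pdB n (0, EuclideanSpace.single i 1)
    (fun y => pdB n (0, EuclideanSpace.single i 1) f y /
      Real.sqrt (1 + (pdB n (1, 0) f y)^2
        + ∑ j, (pdB n (0, EuclideanSpace.single j 1) f y)^2)) x

open RealInnerProductSpace


lemma hasFDerivAt_norm' {E : Type*} [NormedAddCommGroup E] [InnerProductSpace ℝ E]
    {x : E} (hx : x ≠ 0) :
    HasFDerivAt (fun y : E => ‖y‖) (‖x‖⁻¹ • innerSL ℝ x) x := by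
  have h1 : HasFDerivAt (fun y : E => ‖y‖ ^ 2) (2 • innerSL ℝ x) x := by
    simpa using (hasFDerivAt_id x).norm_sq
  have hx' : ‖x‖ ≠ 0 := norm_ne_zero_iff.mpr hx
  have h2 : HasDerivAt Real.sqrt (1 / (2 * Real.sqrt (‖x‖ ^ 2))) (‖x‖ ^ 2) :=
    Real.hasDerivAt_sqrt (pow_ne_zero 2 hx')
  have h3 := h2.comp_hasFDerivAt x h1
  have h4 : (Real.sqrt ∘ fun y : E => ‖y‖ ^ 2) = fun y : E => ‖y‖ := by
    funext y; simp [Function.comp, Real.sqrt_sq (norm_nonneg y)]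
  rw [h4] at h3
  refine h3.congr_fderiv ?_
  rw [Real.sqrt_sq (norm_nonneg x)]
  ext v
  simp [ContinuousLinearMap.smul_apply]
  ring

lemma hasFDerivAt_comp_phi {m : ℕ} (F : ℝ × ℝ → ℝ) (y : ℝ × EuclideanSpace ℝ (Fin m))
    (hy : y.2 ≠ 0) (hF : DifferentiableAt ℝ F (y.1, ‖y.2‖)) :
    HasFDerivAt (fun z : ℝ × EuclideanSpace ℝ (Fin m) => F (z.1, ‖z.2‖))
      ((fderiv ℝ F (y.1, ‖y.2‖)).comp
        ((ContinuousLinearMap.fst ℝ ℝ (EuclideanSpace ℝ (Fin m))).prod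
          ((‖y.2‖⁻¹ • innerSL ℝ y.2).comp
            (ContinuousLinearMap.snd ℝ ℝ (EuclideanSpace ℝ (Fin m)))))) y := by
  have hφ : HasFDerivAt (fun z : ℝ × EuclideanSpace ℝ (Fin m) => (z.1, ‖z.2‖))
      ((ContinuousLinearMap.fst ℝ ℝ (EuclideanSpace ℝ (Fin m))).prod
        ((‖y.2‖⁻¹ • innerSL ℝ y.2).comp
          (ContinuousLinearMap.snd ℝ ℝ (EuclideanSpace ℝ (Fin m))))) y :=
    HasFDerivAt.prodMk (hasFDerivAt_fst) ((hasFDerivAt_norm' hy).comp y hasFDerivAt_snd)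
  exact hF.hasFDerivAt.comp y hφ

lemma clm_pair_smul (L : ℝ × ℝ →L[ℝ] ℝ) (c : ℝ) : L (0, c) = c * L (0, 1) := by
  have h : ((0:ℝ), c) = c • ((0:ℝ), (1:ℝ)) := by simp
  rw [h, map_smul, smul_eq_mul]

lemma pd_comp_phi {m : ℕ} (F : ℝ × ℝ → ℝ) (y v : ℝ × EuclideanSpace ℝ (Fin m))
    (hy : y.2 ≠ 0) (hF : DifferentiableAt ℝ F (y.1, ‖y.2‖)) :
    fderiv ℝ (fun z : ℝ × EuclideanSpace ℝ (Fin m) => F (z.1, ‖z.2‖)) y v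
      = fderiv ℝ F (y.1, ‖y.2‖) (v.1, ‖y.2‖⁻¹ * ⟪y.2, v.2⟫) := by
  rw [(hasFDerivAt_comp_phi F y hy hF).fderiv]
  simp

lemma pd1_comp_phi {m : ℕ} (F : ℝ × ℝ → ℝ) (y : ℝ × EuclideanSpace ℝ (Fin m))
    (hy : y.2 ≠ 0) (hF : DifferentiableAt ℝ F (y.1, ‖y.2‖)) :
    fderiv ℝ (fun z : ℝ × EuclideanSpace ℝ (Fin m) => F (z.1, ‖z.2‖)) y
        ((1:ℝ), (0 : EuclideanSpace ℝ (Fin m)))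
      = fderiv ℝ F (y.1, ‖y.2‖) (1, 0) := by
  rw [pd_comp_phi F y _ hy hF]
  simp

lemma pdi_comp_phi {m : ℕ} (F : ℝ × ℝ → ℝ) (y : ℝ × EuclideanSpace ℝ (Fin m))
    (hy : y.2 ≠ 0) (hF : DifferentiableAt ℝ F (y.1, ‖y.2‖)) (i : Fin m) :
    fderiv ℝ (fun z : ℝ × EuclideanSpace ℝ (Fin m) => F (z.1, ‖z.2‖)) y
        ((0:ℝ), EuclideanSpace.single i 1)
      = y.2 i / ‖y.2‖ * fderiv ℝ F (y.1, ‖y.2‖) (0, 1) := by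
  rw [pd_comp_phi F y _ hy hF]
  have h : ⟪y.2, EuclideanSpace.single i (1:ℝ)⟫ = y.2 i := by
    rw [EuclideanSpace.inner_single_right]; simp
  rw [h, clm_pair_smul]
  ring_nf

lemma euclid_sum_sq {m : ℕ} (v : EuclideanSpace ℝ (Fin m)) : ∑ j, (v j)^2 = ‖v‖^2 := by
  rw [EuclideanSpace.norm_eq, Real.sq_sqrt (by positivity)]
  simp [Real.norm_eq_abs, sq_abs]

noncomputable def Ffn (v : ℝ × ℝ) (g : ℝ × ℝ → ℝ) (q : ℝ × ℝ) : ℝ :=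
  pdA v g q / Real.sqrt (1 + (pdA (1,0) g q)^2 + (pdA (0,1) g q)^2)

lemma divTA_eq (g : ℝ × ℝ → ℝ) (q : ℝ × ℝ) :
    divTA g q = pdA (1,0) (Ffn (1,0) g) q + pdA (0,1) (Ffn (0,1) g) q := rfl

lemma diff_pd (g : ℝ × ℝ → ℝ) (q : ℝ × ℝ) (hg : ContDiffAt ℝ 2 g q) (v : ℝ × ℝ) :
    DifferentiableAt ℝ (fun p => pdA v g p) q := by
  have hdf : ContDiffAt ℝ 1 (fderiv ℝ g) q := hg.fderiv_right (by norm_num)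
  have hdfd : DifferentiableAt ℝ (fderiv ℝ g) q := hdf.differentiableAt one_ne_zero
  exact hdfd.clm_apply (differentiableAt_const v)

lemma sqrt_expr_pos (g : ℝ × ℝ → ℝ) (q : ℝ × ℝ) :
    0 < Real.sqrt (1 + (pdA (1,0) g q)^2 + (pdA (0,1) g q)^2) :=
  Real.sqrt_pos.mpr (by positivity)

lemma diff_Ffn (g : ℝ × ℝ → ℝ) (q : ℝ × ℝ) (hg : ContDiffAt ℝ 2 g q) (v : ℝ × ℝ) :
    DifferentiableAt ℝ (Ffn v g) q := by
  have h1 := diff_pd g q hg (1,0)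
  have h2 := diff_pd g q hg (0,1)
  have hWd : DifferentiableAt ℝ
      (fun p => Real.sqrt (1 + (pdA (1,0) g p)^2 + (pdA (0,1) g p)^2)) q := by
    apply DifferentiableAt.sqrt
    · exact ((differentiableAt_const 1).add (h1.pow 2)).add (h2.pow 2)
    · positivity
  show DifferentiableAt ℝ
      (fun p => pdA v g p / Real.sqrt (1 + (pdA (1,0) g p)^2 + (pdA (0,1) g p)^2)) q
  simp only [div_eq_mul_inv]
  exact (diff_pd g q hg v).mul (hWd.inv (sqrt_expr_pos g q).ne')

/-- The mean-curvature identity for the rotationally symmetric extension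
`g̃(x₁,x') = g(x₁,|x'|)`:
`div(Tg̃)(x) = div(Tg)(x₁,r) + ((n-2)/r)·g_{x₂}(x₁,r)/√(1+|∇g(x₁,r)|²)`. -/
theorem stmt7 (n : ℕ) (hn : 2 ≤ n) (Ω : Set (ℝ × ℝ)) (hΩopen : IsOpen Ω)
    (hΩ : Ω ⊆ {q : ℝ × ℝ | 0 < q.2})
    (g : ℝ × ℝ → ℝ) (hg : ContDiffOn ℝ 2 g Ω)
    (gt : ℝ × EuclideanSpace ℝ (Fin (n-1)) → ℝ)
    (hgt : ∀ x, gt x = g (x.1, ‖x.2‖))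
    (x : ℝ × EuclideanSpace ℝ (Fin (n-1)))
    (hr : 0 < ‖x.2‖) (hx : (x.1, ‖x.2‖) ∈ Ω) :
    divTB n gt x
      = divTA g (x.1, ‖x.2‖)
        + ((n : ℝ) - 2) / ‖x.2‖ * pdA (0, 1) g (x.1, ‖x.2‖) /
            Real.sqrt (1 + (pdA (1, 0) g (x.1, ‖x.2‖))^2
              + (pdA (0, 1) g (x.1, ‖x.2‖))^2) := by
  have hrne : ‖x.2‖ ≠ 0 := ne_of_gt hr
  have hx2 : x.2 ≠ 0 := norm_ne_zero_iff.mp hrne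
  have hgtfun : gt = fun y : ℝ × EuclideanSpace ℝ (Fin (n-1)) => g (y.1, ‖y.2‖) :=
    funext hgt
  -- the open neighbourhood on which everything is nice
  have hVopen : IsOpen {y : ℝ × EuclideanSpace ℝ (Fin (n-1)) |
      y.2 ≠ 0 ∧ (y.1, ‖y.2‖) ∈ Ω} := by
    have h1 : IsOpen {y : ℝ × EuclideanSpace ℝ (Fin (n-1)) | y.2 ≠ 0} :=
      isOpen_compl_singleton.preimage continuous_snd
    have h2 : IsOpen {y : ℝ × EuclideanSpace ℝ (Fin (n-1)) | (y.1, ‖y.2‖) ∈ Ω} :=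
      hΩopen.preimage (continuous_fst.prodMk (continuous_norm.comp continuous_snd))
    exact h1.inter h2
  have hV : {y : ℝ × EuclideanSpace ℝ (Fin (n-1)) | y.2 ≠ 0 ∧ (y.1, ‖y.2‖) ∈ Ω}
      ∈ nhds x := hVopen.mem_nhds ⟨hx2, hx⟩
  have hC2 : ∀ y : ℝ × EuclideanSpace ℝ (Fin (n-1)), (y.1, ‖y.2‖) ∈ Ω →
      ContDiffAt ℝ 2 g (y.1, ‖y.2‖) := fun y hm => hg.contDiffAt (hΩopen.mem_nhds hm)
  have hgd : ∀ y : ℝ × EuclideanSpace ℝ (Fin (n-1)), (y.1, ‖y.2‖) ∈ Ω →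
      DifferentiableAt ℝ g (y.1, ‖y.2‖) := fun y hm =>
    (hC2 y hm).differentiableAt two_ne_zero
  -- pointwise formulas for the partial derivatives of gt
  have hpd1 : ∀ y : ℝ × EuclideanSpace ℝ (Fin (n-1)), y.2 ≠ 0 → (y.1, ‖y.2‖) ∈ Ω →
      pdB n (1, 0) gt y = pdA (1, 0) g (y.1, ‖y.2‖) := by
    intro y h1 h2
    show fderiv ℝ gt y (1, 0) = fderiv ℝ g (y.1, ‖y.2‖) (1, 0)
    rw [hgtfun]
    exact pd1_comp_phi g y h1 (hgd y h2)
  have hpdi : ∀ (i : Fin (n-1)) (y : ℝ × EuclideanSpace ℝ (Fin (n-1))),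
      y.2 ≠ 0 → (y.1, ‖y.2‖) ∈ Ω →
      pdB n (0, EuclideanSpace.single i 1) gt y
        = y.2 i / ‖y.2‖ * pdA (0, 1) g (y.1, ‖y.2‖) := by
    intro i y h1 h2
    show fderiv ℝ gt y (0, EuclideanSpace.single i 1)
        = y.2 i / ‖y.2‖ * fderiv ℝ g (y.1, ‖y.2‖) (0, 1)
    rw [hgtfun]
    exact pdi_comp_phi g y h1 (hgd y h2) i
  have hsq : ∀ y : ℝ × EuclideanSpace ℝ (Fin (n-1)), y.2 ≠ 0 → (y.1, ‖y.2‖) ∈ Ω →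
      1 + (pdB n (1, 0) gt y)^2 + ∑ j, (pdB n (0, EuclideanSpace.single j 1) gt y)^2
        = 1 + (pdA (1,0) g (y.1, ‖y.2‖))^2 + (pdA (0,1) g (y.1, ‖y.2‖))^2 := by
    intro y h1 h2
    have hyne : ‖y.2‖ ≠ 0 := norm_ne_zero_iff.mpr h1
    rw [hpd1 y h1 h2]
    congr 1
    have hterm : ∀ j : Fin (n-1), (pdB n (0, EuclideanSpace.single j 1) gt y)^2
        = (pdA (0,1) g (y.1, ‖y.2‖))^2 / ‖y.2‖^2 * (y.2 j)^2 := by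
      intro j
      rw [hpdi j y h1 h2]
      field_simp
    rw [Finset.sum_congr rfl (fun j _ => hterm j), ← Finset.mul_sum, euclid_sum_sq]
    field_simp
  -- differentiability of the flux functions
  have hgC : ContDiffAt ℝ 2 g (x.1, ‖x.2‖) := hC2 x hx
  have hF1d : DifferentiableAt ℝ (Ffn (1,0) g) (x.1, ‖x.2‖) := diff_Ffn g _ hgC (1,0)
  have hF2d : DifferentiableAt ℝ (Ffn (0,1) g) (x.1, ‖x.2‖) := diff_Ffn g _ hgC (0,1)
  -- the first term
  have hAev : (fun y => pdB n (1, 0) gt y /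
      Real.sqrt (1 + (pdB n (1, 0) gt y)^2
        + ∑ j, (pdB n (0, EuclideanSpace.single j 1) gt y)^2))
      =ᶠ[nhds x] (fun y : ℝ × EuclideanSpace ℝ (Fin (n-1)) => Ffn (1,0) g (y.1, ‖y.2‖)) := by
    filter_upwards [hV] with y hy
    rw [hsq y hy.1 hy.2, hpd1 y hy.1 hy.2]
    rfl
  have hAval : pdB n (1, 0) (fun y => pdB n (1, 0) gt y /
      Real.sqrt (1 + (pdB n (1, 0) gt y)^2
        + ∑ j, (pdB n (0, EuclideanSpace.single j 1) gt y)^2)) x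
      = pdA (1, 0) (Ffn (1,0) g) (x.1, ‖x.2‖) := by
    show fderiv ℝ _ x ((1:ℝ), (0 : EuclideanSpace ℝ (Fin (n-1)))) = _
    rw [hAev.fderiv_eq]
    exact pd1_comp_phi (Ffn (1,0) g) x hx2 hF1d
  -- the second batch of terms
  have hBev : ∀ i : Fin (n-1), (fun y => pdB n (0, EuclideanSpace.single i 1) gt y /
      Real.sqrt (1 + (pdB n (1, 0) gt y)^2
        + ∑ j, (pdB n (0, EuclideanSpace.single j 1) gt y)^2))
      =ᶠ[nhds x] (fun y : ℝ × EuclideanSpace ℝ (Fin (n-1)) =>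
        Ffn (0,1) g (y.1, ‖y.2‖) * (y.2 i * (‖y.2‖)⁻¹)) := by
    intro i
    filter_upwards [hV] with y hy
    rw [hsq y hy.1 hy.2, hpdi i y hy.1 hy.2]
    show y.2 i / ‖y.2‖ * pdA (0,1) g (y.1, ‖y.2‖) /
        Real.sqrt (1 + (pdA (1,0) g (y.1, ‖y.2‖))^2 + (pdA (0,1) g (y.1, ‖y.2‖))^2)
      = pdA (0,1) g (y.1, ‖y.2‖) /
        Real.sqrt (1 + (pdA (1,0) g (y.1, ‖y.2‖))^2 + (pdA (0,1) g (y.1, ‖y.2‖))^2)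
          * (y.2 i * (‖y.2‖)⁻¹)
    ring
  have hBval : ∀ i : Fin (n-1), pdB n (0, EuclideanSpace.single i 1)
      (fun y => pdB n (0, EuclideanSpace.single i 1) gt y /
        Real.sqrt (1 + (pdB n (1, 0) gt y)^2
          + ∑ j, (pdB n (0, EuclideanSpace.single j 1) gt y)^2)) x
      = Ffn (0,1) g (x.1, ‖x.2‖) / ‖x.2‖
        + (pdA (0,1) (Ffn (0,1) g) (x.1, ‖x.2‖) / ‖x.2‖^2
            - Ffn (0,1) g (x.1, ‖x.2‖) / ‖x.2‖^3) * (x.2 i)^2 := by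
    intro i
    have hc := hasFDerivAt_comp_phi (Ffn (0,1) g) x hx2 hF2d
    have hcoord : HasFDerivAt (fun y : ℝ × EuclideanSpace ℝ (Fin (n-1)) => y.2 i)
        ((EuclideanSpace.proj i).comp
          (ContinuousLinearMap.snd ℝ ℝ (EuclideanSpace ℝ (Fin (n-1))))) x := by
      exact ((EuclideanSpace.proj (𝕜 := ℝ) i).hasFDerivAt).comp x hasFDerivAt_snd
    have hnrm : HasFDerivAt (fun y : ℝ × EuclideanSpace ℝ (Fin (n-1)) => ‖y.2‖)
        ((‖x.2‖⁻¹ • innerSL ℝ x.2).comp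
          (ContinuousLinearMap.snd ℝ ℝ (EuclideanSpace ℝ (Fin (n-1))))) x :=
      (hasFDerivAt_norm' hx2).comp x hasFDerivAt_snd
    have hinv := (hasDerivAt_inv hrne).comp_hasFDerivAt x hnrm
    have hd := hcoord.mul hinv
    have hB := hc.mul hd
    simp only [Function.comp_def] at hB
    show fderiv ℝ _ x ((0:ℝ), EuclideanSpace.single i 1) = _
    rw [(hBev i).fderiv_eq, (show HasFDerivAt (fun y : ℝ × EuclideanSpace ℝ (Fin (n-1)) =>
      Ffn (0,1) g (y.1, ‖y.2‖) * (y.2 i * ‖y.2‖⁻¹)) _ x from hB).fderiv]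
    have hip : ⟪x.2, EuclideanSpace.single i (1:ℝ)⟫ = x.2 i := by
      rw [EuclideanSpace.inner_single_right]; simp
    simp only [ContinuousLinearMap.add_apply, ContinuousLinearMap.smul_apply,
      ContinuousLinearMap.comp_apply, ContinuousLinearMap.prod_apply,
      ContinuousLinearMap.coe_fst', ContinuousLinearMap.coe_snd',
      PiLp.proj_apply, EuclideanSpace.single_apply, innerSL_apply_apply,
      smul_eq_mul, hip, Pi.mul_apply, eq_self_iff_true, if_true]
    rw [clm_pair_smul]
    simp only [pdA]
    field_simp
    ring
  -- assemble
  have hcast : ((n - 1 : ℕ) : ℝ) = (n : ℝ) - 1 := by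
    rw [Nat.cast_sub (by omega : 1 ≤ n)]; simp
  unfold divTB
  rw [hAval, Finset.sum_congr rfl (fun i _ => hBval i), Finset.sum_add_distrib,
    Finset.sum_const, ← Finset.mul_sum, euclid_sum_sq, Finset.card_univ,
    Fintype.card_fin, nsmul_eq_mul, hcast, divTA_eq, mul_div_assoc]
  have hcF : pdA (0,1) g (x.1, ‖x.2‖) /
      Real.sqrt (1 + (pdA (1,0) g (x.1, ‖x.2‖))^2 + (pdA (0,1) g (x.1, ‖x.2‖))^2)
      = Ffn (0,1) g (x.1, ‖x.2‖) := rfl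
  rw [hcF]
  field_simp
  ring
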